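/- Let α ≥ 0, γ, λ ∈ ℝ and w, e, e₋, φ' ∈ ℝ^k, with φ = e − γλ e₋ and d = φ − γφ'. If w' ∈ ℝ^k satisfies the zero-reward implicit TD(λ) equation w' = w + α (γ⟨φ', w⟩ + γλ⟨e₋, w⟩ − ⟨e, w'⟩) e, then w' = (I − α Q X) w, where Q = (I + α e eᵀ)⁻¹ and X = e dᵀ. -/

import Mathlib

open Matrix

lemma vecMulVec_mulVec' {k : ℕ} (u v w : Fin k → ℝ) :
    (Matrix.vecMulVec u v).mulVec w = (v ⬝ᵥ w) • u := by
  funext i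
  simp only [Matrix.mulVec, Matrix.vecMulVec_apply, dotProduct, Pi.smul_apply,
    smul_eq_mul, Finset.sum_mul]
  exact Finset.sum_congr rfl (fun j _ => by ring)

lemma M_posdef {k : ℕ} (α : ℝ) (hα : 0 ≤ α) (e : Fin k → ℝ) :
    ((1 : Matrix (Fin k) (Fin k) ℝ) + α • Matrix.vecMulVec e e).PosDef := by
  refine Matrix.PosDef.of_dotProduct_mulVec_pos ?_ ?_
  · unfold Matrix.IsHermitian
    ext i j
    simp only [Matrix.transpose_apply, Matrix.add_apply, Matrix.smul_apply,
      Matrix.one_apply, Matrix.vecMulVec_apply, smul_eq_mul, Matrix.conjTranspose_apply,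
      star_trivial]
    rw [mul_comm (e j) (e i)]
    congr 1
    simp [eq_comm]
  · intro x hx
    have hquad : (star x) ⬝ᵥ (((1 : Matrix (Fin k) (Fin k) ℝ) + α • Matrix.vecMulVec e e).mulVec x)
        = x ⬝ᵥ x + α * (e ⬝ᵥ x) ^ 2 := by
      simp only [Matrix.add_mulVec, Matrix.one_mulVec, Matrix.smul_mulVec,
        dotProduct_add, dotProduct_smul, vecMulVec_mulVec', star_trivial,
        smul_eq_mul, smul_smul]
      rw [dotProduct_comm x e]
      ring
    rw [hquad]
    have h1 : 0 < x ⬝ᵥ x := by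
      obtain ⟨i, hi⟩ := Function.ne_iff.mp hx
      have : (0:ℝ) < x i * x i := mul_self_pos.mpr hi
      exact Finset.sum_pos' (fun j _ => mul_self_nonneg (x j)) ⟨i, Finset.mem_univ i, this⟩
    positivity

theorem implicit_td_zero_reward_matrix_form (k : ℕ) (α : ℝ) (hα : 0 ≤ α)
    (γ lam : ℝ) (w e em φ' : Fin k → ℝ) (φ d : Fin k → ℝ)
    (hφ : φ = e - (γ * lam) • em) (hd : d = φ - γ • φ')
    (w' : Fin k → ℝ)
    (hw' : w' = w + (α * (γ * (φ' ⬝ᵥ w) + γ * lam * (em ⬝ᵥ w) - e ⬝ᵥ w')) • e)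
    (Q X : Matrix (Fin k) (Fin k) ℝ)
    (hQ : Q = ((1 : Matrix (Fin k) (Fin k) ℝ) + α • Matrix.vecMulVec e e)⁻¹)
    (hX : X = Matrix.vecMulVec e d) :
    w' = ((1 : Matrix (Fin k) (Fin k) ℝ) - α • (Q * X)).mulVec w := by
  set M : Matrix (Fin k) (Fin k) ℝ := (1 : Matrix (Fin k) (Fin k) ℝ) + α • Matrix.vecMulVec e e
    with hM
  have hMpd : M.PosDef := M_posdef α hα e
  have hUnit : IsUnit M.det := isUnit_iff_ne_zero.mpr (ne_of_gt hMpd.det_pos)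
  have hMQ : M * Q = 1 := by rw [hQ]; exact Matrix.mul_nonsing_inv M hUnit
  have hQM : Q * M = 1 := by rw [hQ]; exact Matrix.nonsing_inv_mul M hUnit
  -- It suffices to show M *ᵥ w' = M *ᵥ RHS
  have key : M.mulVec w' = M.mulVec (((1 : Matrix (Fin k) (Fin k) ℝ) - α • (Q * X)).mulVec w) := by
    have hRHS : M.mulVec (((1 : Matrix (Fin k) (Fin k) ℝ) - α • (Q * X)).mulVec w)
        = (M - α • X).mulVec w := by
      rw [Matrix.mulVec_mulVec]
      rw [Matrix.mul_sub, Matrix.mul_smul, ← Matrix.mul_assoc, hMQ, Matrix.one_mul,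
        Matrix.mul_one]
    rw [hRHS]
    have hLHS : M.mulVec w' = w' + (α * (e ⬝ᵥ w')) • e := by
      rw [hM, Matrix.add_mulVec, Matrix.one_mulVec, Matrix.smul_mulVec,
        vecMulVec_mulVec']
      rw [smul_smul]
    rw [hLHS, Matrix.sub_mulVec, Matrix.smul_mulVec, hX, vecMulVec_mulVec', hM,
      Matrix.add_mulVec, Matrix.one_mulVec, Matrix.smul_mulVec, vecMulVec_mulVec']
    have hdw : d ⬝ᵥ w = e ⬝ᵥ w - γ * lam * (em ⬝ᵥ w) - γ * (φ' ⬝ᵥ w) := by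
      subst hd hφ
      simp [sub_dotProduct, smul_dotProduct]
      try ring
    have hew' : e ⬝ᵥ w' = e ⬝ᵥ w
        + (α * (γ * (φ' ⬝ᵥ w) + γ * lam * (em ⬝ᵥ w) - e ⬝ᵥ w')) * (e ⬝ᵥ e) := by
      conv_lhs => rw [hw']
      simp only [dotProduct_add, dotProduct_smul, smul_eq_mul]
    rw [hw', hdw]
    funext i
    simp only [Pi.add_apply, Pi.sub_apply, Pi.smul_apply, smul_eq_mul,
      dotProduct_add, dotProduct_smul, smul_eq_mul]
    linear_combination (-(α * e i)) * hew' 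
  have hinj : Function.Injective M.mulVec := by
    intro x y hxy
    have := congrArg Q.mulVec hxy
    rwa [Matrix.mulVec_mulVec, Matrix.mulVec_mulVec, hQM, Matrix.one_mulVec,
      Matrix.one_mulVec] at this
  exact hinj key
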